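/- The number of bargraphs with exactly j H steps and exactly k U steps avoiding both factors DH and HH equals the number of binary words of length j+k over {U,H} with j letters H, ending in H, containing no HH, and starting with U; equivalently, the generating function of bargraphs avoiding DH and HH, with x marking H and y marking U, is xy/(1−y−xy). -/

import Mathlib

/-- Steps of bargraphs / Motzkin paths. -/
inductive Step where
  | U : Step
  | H : Step
  | D : Step
deriving DecidableEq

/-- Vertical displacement of a step. -/
def Step.val : Step → ℤ
  | .U => 1
  | .H => 0
  | .D => -1

/-- Mirror of a step (swap U and D). -/
def Step.mirror : Step → Step
  | .U => .D
  | .H => .H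
  | .D => .U

/-- Final height of a word. -/
def hgt (w : List Step) : ℤ := (w.map Step.val).sum

/-- A Motzkin path prefix: never goes below the x-axis. -/
def IsMotzkinPrefix (w : List Step) : Prop := ∀ p : List Step, p <+: w → 0 ≤ hgt p

/-- A Motzkin path: never below the x-axis, ends at height 0. -/
def IsMotzkin (w : List Step) : Prop := IsMotzkinPrefix w ∧ hgt w = 0

/-- No peak `UD` and no valley `DU`. -/
def Cornerless (w : List Step) : Prop :=
  ¬ [Step.U, Step.D] <:+: w ∧ ¬ [Step.D, Step.U] <:+: w

/-- A bargraph: starts at the origin, ends on the x-axis, stays strictly above the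
x-axis except at the endpoints, and has no factor `UD` or `DU`. -/
def IsBargraph (w : List Step) : Prop :=
  2 ≤ w.length ∧ hgt w = 0 ∧
    (∀ p : List Step, p <+: w → p ≠ [] → p ≠ w → 0 < hgt p) ∧ Cornerless w

/-- Semiperimeter: number of `U` steps plus number of `H` steps. -/
def semi (w : List Step) : ℕ := w.count Step.U + w.count Step.H

/-- Length of the initial run of `U` steps. -/
def leadU : List Step → ℕ
  | Step.U :: rest => leadU rest + 1
  | _ => 0

/-- Length of the initial run of `H` steps. -/
def leadH : List Step → ℕ
  | Step.H :: rest => leadH rest + 1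
  | _ => 0

/-- Length of the initial run of `D` steps. -/
def leadD : List Step → ℕ
  | Step.D :: rest => leadD rest + 1
  | _ => 0

/-- Length of the first maximal run of `D` steps (0 if none). -/
def firstDescLen : List Step → ℕ
  | [] => 0
  | Step.D :: rest => leadD rest + 1
  | _ :: rest => firstDescLen rest

/-- Number of occurrences of the two-letter factor `a b`. -/
def cnt2 (a b : Step) : List Step → ℕ
  | x :: y :: rest => (if x = a ∧ y = b then 1 else 0) + cnt2 a b (y :: rest)
  | _ => 0

/-- Heights of the columns (`H` steps), starting from a given height. -/
def colHeights : ℤ → List Step → List ℤ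
  | _, [] => []
  | h, Step.U :: rest => colHeights (h + 1) rest
  | h, Step.H :: rest => h :: colHeights h rest
  | h, Step.D :: rest => colHeights (h - 1) rest

/-- Width of the leftmost maximal horizontal segment (0 if none). -/
def lhsW : List Step → ℕ
  | [] => 0
  | Step.H :: rest => leadH rest + 1
  | _ :: rest => lhsW rest

/-- Delete `h` steps at the start of the leftmost horizontal segment. -/
def stripLeadH (h : ℕ) : List Step → List Step
  | [] => []
  | Step.H :: rest => List.drop h (Step.H :: rest)
  | s :: rest => s :: stripLeadH h rest

/-- Number of initial columns of height 1: largest `j` such that the word begins `U H^j`. -/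
def iuc : List Step → ℕ
  | Step.U :: rest => leadH rest
  | _ => 0

/-- Number of maximal horizontal segments. -/
def hsCount : List Step → ℕ
  | [] => 0
  | [Step.H] => 1
  | [_] => 0
  | a :: b :: rest => (if a = Step.H ∧ b ≠ Step.H then 1 else 0) + hsCount (b :: rest)

/-- Mirror image: reverse the word and swap `U` with `D`. -/
def mir (w : List Step) : List Step := (w.reverse).map Step.mirror

/-- Shape of strictly alternating bargraphs:
`U^{i₁} H D^{k₁} H U^{i₂} H D^{k₂} H ⋯ U^{iₘ} H D^{kₘ}` with all `iᵣ, kᵣ ≥ 1`. -/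
inductive SAShape : List Step → Prop where
  | base (i k : ℕ) : 1 ≤ i → 1 ≤ k →
      SAShape (List.replicate i Step.U ++ [Step.H] ++ List.replicate k Step.D)
  | cons (i k : ℕ) (w : List Step) : 1 ≤ i → 1 ≤ k → SAShape w →
      SAShape (List.replicate i Step.U ++ [Step.H] ++ List.replicate k Step.D ++ [Step.H] ++ w)

/-- A strictly alternating bargraph. -/
def IsStrictAlt (w : List Step) : Prop := IsBargraph w ∧ SAShape w

/-- A secondary structure on `{0, …, m-1}`: all consecutive edges are present, every
vertex has at most one non-consecutive neighbour, and there are no crossing edges. -/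
def IsSecondaryStructure {m : ℕ} (G : SimpleGraph (Fin m)) : Prop :=
  (∀ i j : Fin m, (i : ℕ) + 1 = (j : ℕ) → G.Adj i j) ∧
  (∀ i j k : Fin m, G.Adj i j → G.Adj i k →
      (i : ℕ) + 1 ≠ (j : ℕ) → (j : ℕ) + 1 ≠ (i : ℕ) →
      (i : ℕ) + 1 ≠ (k : ℕ) → (k : ℕ) + 1 ≠ (i : ℕ) → j = k) ∧
  ¬ ∃ i j k l : Fin m, (i : ℕ) < (j : ℕ) ∧ (j : ℕ) < (k : ℕ) ∧ (k : ℕ) < (l : ℕ) ∧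
      G.Adj i k ∧ G.Adj j l

/-- Generating function of bargraphs: `x` (variable 0) marks `H` steps,
`y` (variable 1) marks `U` steps. -/
noncomputable def BG : MvPowerSeries (Fin 2) ℚ :=
  fun d => (Nat.card {w : List Step //
    IsBargraph w ∧ w.count Step.H = d 0 ∧ w.count Step.U = d 1} : ℚ)

/-- Generating function of cornerless Motzkin paths. -/
noncomputable def MG : MvPowerSeries (Fin 2) ℚ :=
  fun d => (Nat.card {w : List Step //
    IsMotzkin w ∧ Cornerless w ∧ w.count Step.H = d 0 ∧ w.count Step.U = d 1} : ℚ)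

/-- Generating function of bargraphs avoiding the factor `DH`. -/
noncomputable def BDH : MvPowerSeries (Fin 2) ℚ :=
  fun d => (Nat.card {w : List Step //
    IsBargraph w ∧ ¬ [Step.D, Step.H] <:+: w ∧
      w.count Step.H = d 0 ∧ w.count Step.U = d 1} : ℚ)

/-- Generating function of bargraphs avoiding the factors `DH` and `HH`. -/
noncomputable def BDHHH : MvPowerSeries (Fin 2) ℚ :=
  fun d => (Nat.card {w : List Step //
    IsBargraph w ∧ ¬ [Step.D, Step.H] <:+: w ∧ ¬ [Step.H, Step.H] <:+: w ∧
      w.count Step.H = d 0 ∧ w.count Step.U = d 1} : ℚ)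

/-- Generating function of cornerless Motzkin path prefixes ending at height `h`. -/
noncomputable def Pgf (h : ℕ) : MvPowerSeries (Fin 2) ℚ :=
  fun d => (Nat.card {w : List Step //
    IsMotzkinPrefix w ∧ Cornerless w ∧ hgt w = (h : ℤ) ∧
      w.count Step.H = d 0 ∧ w.count Step.U = d 1} : ℚ)

/-- Decomposition `G = U^a G₁ H G₂ D^a` of a strictly alternating bargraph. -/
def SADecomp (t : ℕ × List Step × List Step) (G : List Step) : Prop :=
  1 ≤ t.1 ∧ IsStrictAlt t.2.1 ∧ IsStrictAlt (Step.U :: (t.2.2 ++ [Step.D])) ∧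
    G = List.replicate t.1 Step.U ++ t.2.1 ++ [Step.H] ++ t.2.2 ++
      List.replicate t.1 Step.D

/-! ### Auxiliary machinery -/

section Aux

open Step List

instance : Fintype Step :=
  ⟨⟨{Step.U, Step.H, Step.D}, by decide⟩, fun x => by cases x <;> decide⟩

/-- Recursive characterization of two-letter factors. -/
def hasF (a b : Step) : List Step → Prop
  | x :: y :: r => (x = a ∧ y = b) ∨ hasF a b (y :: r)
  | _ => False

@[simp] lemma hasF_nil (a b : Step) : ¬ hasF a b [] := by simp [hasF]

@[simp] lemma hasF_single (a b x : Step) : ¬ hasF a b [x] := by simp [hasF]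

lemma hasF_cons_cons (a b x y : Step) (r : List Step) :
    hasF a b (x :: y :: r) ↔ (x = a ∧ y = b) ∨ hasF a b (y :: r) := Iff.rfl

lemma hasF_iff (a b : Step) (w : List Step) : hasF a b w ↔ [a, b] <:+: w := by
  induction w with
  | nil => simp
  | cons x w ih =>
    cases w with
    | nil =>
      simp only [hasF_single, false_iff]
      intro h
      have := h.length_le
      simp at this
    | cons y r =>
      rw [hasF_cons_cons]
      constructor
      · rintro (⟨rfl, rfl⟩ | h)
        · exact ⟨[], r, rfl⟩
        · exact (ih.mp h).trans (List.infix_cons (List.infix_refl _))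
      · intro h
        rcases List.infix_cons_iff.mp h with hp | h
        · rcases List.cons_prefix_cons.mp hp with ⟨rfl, hp2⟩
          rcases List.cons_prefix_cons.mp hp2 with ⟨rfl, -⟩
          exact Or.inl ⟨rfl, rfl⟩
        · exact Or.inr (ih.mpr h)

lemma hasF_tail (a b x : Step) (w : List Step) (h : hasF a b w) : hasF a b (x :: w) := by
  cases w with
  | nil => simp at h
  | cons y r => exact Or.inr h

lemma hasF_mem_left (a b : Step) (w : List Step) (h : hasF a b w) : a ∈ w := by
  induction w with
  | nil => simp at h
  | cons x w ih =>
    cases w with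
    | nil => simp at h
    | cons y r =>
      rcases h with ⟨rfl, -⟩ | h
      · exact List.mem_cons_self
      · exact List.mem_cons_of_mem _ (ih h)

lemma hasF_mem_right (a b : Step) (w : List Step) (h : hasF a b w) : b ∈ w := by
  induction w with
  | nil => simp at h
  | cons x w ih =>
    cases w with
    | nil => simp at h
    | cons y r =>
      rcases h with ⟨-, rfl⟩ | h
      · exact List.mem_cons_of_mem _ (List.mem_cons_self)
      · exact List.mem_cons_of_mem _ (ih h)

lemma hasF_append (a b : Step) (u v : List Step) (h : hasF a b (u ++ v)) :
    hasF a b u ∨ hasF a b v ∨ (u.getLast? = some a ∧ v.head? = some b) := by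
  induction u with
  | nil => exact Or.inr (Or.inl (by simpa using h))
  | cons x u ih =>
    cases u with
    | nil =>
      cases v with
      | nil => simp at h
      | cons y r =>
        rcases h with ⟨rfl, rfl⟩ | h
        · exact Or.inr (Or.inr ⟨rfl, rfl⟩)
        · exact Or.inr (Or.inl h)
    | cons z u' =>
      rcases h with ⟨rfl, rfl⟩ | h
      · exact Or.inl (Or.inl ⟨rfl, rfl⟩)
      · rcases ih h with h | h | h
        · exact Or.inl (hasF_tail _ _ _ _ h)
        · exact Or.inr (Or.inl h)
        · exact Or.inr (Or.inr ⟨by rw [List.getLast?_cons_cons]; exact h.1, h.2⟩)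

lemma hasF_of_getLast (a b : Step) (u t : List Step) (h : u.getLast? = some a) :
    hasF a b (u ++ b :: t) := by
  induction u with
  | nil => simp at h
  | cons x u ih =>
    cases u with
    | nil =>
      simp only [List.getLast?_singleton, Option.some.injEq] at h
      subst h
      exact Or.inl ⟨rfl, rfl⟩
    | cons z u' =>
      rw [List.getLast?_cons_cons] at h
      exact hasF_tail _ _ _ _ (ih h)

lemma count_UHD (w : List Step) :
    w.count Step.U + w.count Step.H + w.count Step.D = w.length := by
  induction w with
  | nil => simp
  | cons x w ih =>
    cases x <;> simp [List.count_cons] <;> omega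

lemma hgt_cons (x : Step) (w : List Step) : hgt (x :: w) = x.val + hgt w := by
  simp [hgt]

lemma hgt_append (u v : List Step) : hgt (u ++ v) = hgt u + hgt v := by
  simp [hgt]

lemma hgt_eq_count (w : List Step) :
    hgt w = (w.count Step.U : ℤ) - (w.count Step.D : ℤ) := by
  induction w with
  | nil => simp [hgt]
  | cons x w ih =>
    rw [hgt_cons, ih]
    cases x <;> simp [List.count_cons, Step.val] <;> push_cast <;> ring

lemma hgt_replicate_D (m : ℕ) : hgt (List.replicate m Step.D) = -(m : ℤ) := by
  rw [hgt_eq_count]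
  simp [List.count_replicate]

/-- A word avoiding `DU` and `DH` splits as a `D`-free part followed by `D`s. -/
lemma split_D (v : List Step) (h1 : ¬ hasF Step.D Step.U v) (h2 : ¬ hasF Step.D Step.H v) :
    ∃ u m, v = u ++ List.replicate m Step.D ∧ Step.D ∉ u := by
  induction v with
  | nil => exact ⟨[], 0, rfl, by simp⟩
  | cons x v ih =>
    obtain ⟨u, m, rfl, hu⟩ := ih (fun h => h1 (hasF_tail _ _ _ _ h))
      (fun h => h2 (hasF_tail _ _ _ _ h))
    cases x with
    | D =>
      cases u with
      | nil =>
        exact ⟨[], m + 1, by simp [List.replicate_succ], by simp⟩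
      | cons y u' =>
        exfalso
        have hy : y ≠ Step.D := fun h => hu (h ▸ List.mem_cons_self)
        cases y with
        | U => exact h1 (Or.inl ⟨rfl, rfl⟩)
        | H => exact h2 (Or.inl ⟨rfl, rfl⟩)
        | D => exact hy rfl
    | U => exact ⟨Step.U :: u, m, rfl, by simpa using hu⟩
    | H => exact ⟨Step.H :: u, m, rfl, by simpa using hu⟩

lemma prefix_append_cases {p u v : List Step} (h : p <+: u ++ v) :
    p <+: u ∨ ∃ q, q <+: v ∧ p = u ++ q := by
  by_cases hl : p.length ≤ u.length
  · exact Or.inl (List.prefix_of_prefix_length_le h (List.prefix_append u v) hl)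
  · have hu : u <+: p :=
      List.prefix_of_prefix_length_le (List.prefix_append u v) h (by omega)
    obtain ⟨q, rfl⟩ := hu
    obtain ⟨t, ht⟩ := h
    refine Or.inr ⟨q, ⟨t, ?_⟩, rfl⟩
    rw [List.append_assoc] at ht
    exact (List.append_cancel_left ht)

lemma prefix_replicate {p : List Step} {m : ℕ} (h : p <+: List.replicate m Step.D) :
    p = List.replicate p.length Step.D ∧ p.length ≤ m := by
  constructor
  · exact List.eq_replicate_of_mem fun b hb =>
      List.eq_of_mem_replicate (h.sublist.mem hb)
  · simpa using h.length_le

lemma head_eq_of_prefix {p w : List Step} (h : p <+: w) (hp : p ≠ [])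
    (hw : w.head? = some Step.U) : p.head? = some Step.U := by
  obtain ⟨t, rfl⟩ := h
  cases p with
  | nil => exact absurd rfl hp
  | cons x p' => simpa using hw

/-- The word-side predicate. -/
def WrdP (j k : ℕ) (w : List Step) : Prop :=
  (∀ s ∈ w, s = Step.U ∨ s = Step.H) ∧ w.length = j + k ∧ w.count Step.H = j ∧
    w.getLast? = some Step.H ∧ ¬ [Step.H, Step.H] <:+: w ∧ w.head? = some Step.U

/-- The bargraph-side predicate. -/
def BrgP (j k : ℕ) (w : List Step) : Prop :=
  IsBargraph w ∧ ¬ [Step.D, Step.H] <:+: w ∧ ¬ [Step.H, Step.H] <:+: w ∧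
    w.count Step.H = j ∧ w.count Step.U = k

lemma wrdP_not_memD {j k : ℕ} {w : List Step} (h : WrdP j k w) : Step.D ∉ w := by
  intro hm
  rcases h.1 _ hm with h' | h' <;> exact absurd h' (by decide)

lemma wrdP_countD {j k : ℕ} {w : List Step} (h : WrdP j k w) : w.count Step.D = 0 :=
  List.count_eq_zero.2 (wrdP_not_memD h)

lemma wrdP_countU {j k : ℕ} {w : List Step} (h : WrdP j k w) : w.count Step.U = k := by
  have h1 := count_UHD w
  have h2 := wrdP_countD h
  have h3 := h.2.1
  have h4 := h.2.2.1
  omega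

lemma wrdP_ne_nil {j k : ℕ} {w : List Step} (h : WrdP j k w) : w ≠ [] := by
  intro e
  rw [e] at h
  simpa using h.2.2.2.2.2

lemma wrdP_k_pos {j k : ℕ} {w : List Step} (h : WrdP j k w) : 1 ≤ k := by
  have hU : Step.U ∈ w := by
    cases w with
    | nil => exact absurd rfl (wrdP_ne_nil h)
    | cons x t =>
      have : x = Step.U := by simpa using h.2.2.2.2.2
      exact this ▸ List.mem_cons_self
  have := wrdP_countU h
  have := List.count_pos_iff.2 hU
  omega

lemma wrdP_forward {j k : ℕ} {w : List Step} (h : WrdP j k w) :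
    BrgP j k (w ++ List.replicate k Step.D) := by
  have hD := wrdP_not_memD h
  have hcD := wrdP_countD h
  have hcU := wrdP_countU h
  have hk := wrdP_k_pos h
  have hlen := h.2.1
  have hne := wrdP_ne_nil h
  have hwne : 1 ≤ w.length := by
    cases w with
    | nil => exact absurd rfl hne
    | cons x t => simp
  have hgtw : hgt w = (k : ℤ) := by
    rw [hgt_eq_count, hcU, hcD]
    simp
  have repU : Step.U ∉ List.replicate k Step.D := fun hm =>
    absurd (List.eq_of_mem_replicate hm) (by decide)
  have repH : Step.H ∉ List.replicate k Step.D := fun hm =>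
    absurd (List.eq_of_mem_replicate hm) (by decide)
  have lastw : w.getLast? = some Step.H := h.2.2.2.1
  have headD : ∀ c : Step, (List.replicate k Step.D).head? = some c → c = Step.D := by
    intro c hc
    cases k with
    | zero => simp at hc
    | succ k' =>
      rw [List.replicate_succ] at hc
      simpa using hc.symm
  have hUD : ¬ hasF Step.U Step.D (w ++ List.replicate k Step.D) := by
    intro hf
    rcases hasF_append _ _ _ _ hf with h1 | h1 | h1
    · exact hD (hasF_mem_right _ _ _ h1)
    · exact repU (hasF_mem_left _ _ _ h1)
    · rw [lastw] at h1; simpa using h1.1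
  have hDU : ¬ hasF Step.D Step.U (w ++ List.replicate k Step.D) := by
    intro hf
    rcases hasF_append _ _ _ _ hf with h1 | h1 | h1
    · exact hD (hasF_mem_left _ _ _ h1)
    · exact repU (hasF_mem_right _ _ _ h1)
    · exact absurd (headD _ h1.2) (by decide)
  have hDH : ¬ hasF Step.D Step.H (w ++ List.replicate k Step.D) := by
    intro hf
    rcases hasF_append _ _ _ _ hf with h1 | h1 | h1
    · exact hD (hasF_mem_left _ _ _ h1)
    · exact repH (hasF_mem_right _ _ _ h1)
    · exact absurd (headD _ h1.2) (by decide)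
  have hHH : ¬ hasF Step.H Step.H (w ++ List.replicate k Step.D) := by
    intro hf
    rcases hasF_append _ _ _ _ hf with h1 | h1 | h1
    · exact h.2.2.2.2.1 ((hasF_iff _ _ _).1 h1)
    · exact repH (hasF_mem_right _ _ _ h1)
    · exact absurd (headD _ h1.2) (by decide)
  refine ⟨⟨?_, ?_, ?_, ?_⟩, ?_, ?_, ?_, ?_⟩
  · -- length ≥ 2
    rw [List.length_append, List.length_replicate]
    omega
  · -- total height 0
    rw [hgt_append, hgtw, hgt_replicate_D]
    ring
  · -- strict positivity of proper prefixes
    intro p hp hpne hpw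
    rcases prefix_append_cases hp with hpre | ⟨q, hq, rfl⟩
    · have hhead : p.head? = some Step.U := head_eq_of_prefix hpre hpne h.2.2.2.2.2
      have hUmem : Step.U ∈ p := by
        cases p with
        | nil => exact absurd rfl hpne
        | cons x t =>
          have : x = Step.U := by simpa using hhead
          exact this ▸ List.mem_cons_self
      have hDp : p.count Step.D = 0 :=
        List.count_eq_zero.2 fun hm => hD (hpre.sublist.mem hm)
      have hUp : 0 < p.count Step.U := List.count_pos_iff.2 hUmem
      rw [hgt_eq_count, hDp]
      push_cast
      omega
    · obtain ⟨hq', hqlen⟩ := prefix_replicate hq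
      have hqk : q.length ≠ k := by
        intro e
        apply hpw
        rw [hq', e]
      rw [hgt_append, hgtw, hq', hgt_replicate_D]
      have : q.length < k := lt_of_le_of_ne hqlen hqk
      push_cast
      omega
  · -- cornerless
    exact ⟨fun hf => hUD ((hasF_iff _ _ _).2 hf), fun hf => hDU ((hasF_iff _ _ _).2 hf)⟩
  · exact fun hf => hDH ((hasF_iff _ _ _).2 hf)
  · exact fun hf => hHH ((hasF_iff _ _ _).2 hf)
  · rw [List.count_append, h.2.2.1, List.count_replicate]
    simp
  · rw [List.count_append, hcU, List.count_replicate]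
    simp

lemma brgP_backward {j k : ℕ} {v : List Step} (h : BrgP j k v) :
    ∃ w, WrdP j k w ∧ v = w ++ List.replicate k Step.D := by
  obtain ⟨⟨hlen2, hgt0, hpos, hcUD, hcDU⟩, hDH, hHH, hcH, hcU⟩ := h
  obtain ⟨u, m, rfl, hDu⟩ := split_D v
    (fun hf => hcDU ((hasF_iff _ _ _).1 hf)) (fun hf => hDH ((hasF_iff _ _ _).1 hf))
  have hcDu : u.count Step.D = 0 := List.count_eq_zero.2 hDu
  have hcountD : (u ++ List.replicate m Step.D).count Step.D = m := by
    rw [List.count_append, hcDu, List.count_replicate_self]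
    omega
  have hcountU : (u ++ List.replicate m Step.D).count Step.U = u.count Step.U := by
    rw [List.count_append, List.count_replicate]
    simp
  have hcountH : (u ++ List.replicate m Step.D).count Step.H = u.count Step.H := by
    rw [List.count_append, List.count_replicate]
    simp
  have hmk : m = k := by
    have := hgt_eq_count (u ++ List.replicate m Step.D)
    rw [hgt0, hcountD, hcountU] at this
    have h2 : (u.count Step.U : ℤ) = (m : ℤ) := by linarith
    have h2' : u.count Step.U = m := by exact_mod_cast h2
    rw [hcountU, h2'] at hcU
    omega
  subst hmk
  have hcUu : u.count Step.U = m := by rw [← hcountU, hcU]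
  have hcHu : u.count Step.H = j := by rw [← hcountH, hcH]
  have hlenu : u.length = j + m := by
    have h1 := count_UHD u
    omega
  have hletters : ∀ s ∈ u, s = Step.U ∨ s = Step.H := by
    intro s hs
    cases s with
    | U => exact Or.inl rfl
    | H => exact Or.inr rfl
    | D => exact absurd hs hDu
  have hune : u ≠ [] := by
    intro e
    subst e
    have : m = 0 := by simpa using hcUu.symm
    subst this
    simp at hlen2
  have hhead : u.head? = some Step.U := by
    cases hu : u with
    | nil => exact absurd hu hune
    | cons x t =>
      subst hu
      have hpre : [x] <+: (x :: t) ++ List.replicate m Step.D := ⟨t ++ _, rfl⟩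
      have hne1 : [x] ≠ (x :: t) ++ List.replicate m Step.D := by
        intro e
        have h2 := hlen2
        rw [← e] at h2
        simp at h2
      have := hpos [x] hpre (by simp) hne1
      rw [hgt_cons] at this
      simp [hgt] at this
      cases x with
      | U => rfl
      | H => simp [Step.val] at this
      | D => simp [Step.val] at this
  have hkpos : 1 ≤ m := by
    have : Step.U ∈ u := by
      cases u with
      | nil => exact absurd rfl hune
      | cons x t =>
        have : x = Step.U := by simpa using hhead
        exact this ▸ List.mem_cons_self
    have := List.count_pos_iff.2 this
    omega
  have hlast : u.getLast? = some Step.H := by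
    rw [List.getLast?_eq_getLast hune]
    have hzmem := List.getLast_mem hune
    rcases hletters _ hzmem with hz | hz
    · exfalso
      obtain ⟨m', rfl⟩ : ∃ m', m = m' + 1 := ⟨m - 1, by omega⟩
      apply hcUD
      apply (hasF_iff _ _ _).1
      rw [List.replicate_succ]
      exact hasF_of_getLast _ _ _ _ (by rw [List.getLast?_eq_getLast hune, hz])
    · rw [hz]
  have hHHu : ¬ [Step.H, Step.H] <:+: u := fun hi =>
    hHH (hi.trans (List.prefix_append u _).isInfix)
  exact ⟨u, ⟨hletters, hlenu, hcHu, hlast, hHHu, hhead⟩, rfl⟩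

instance wrdFinite (j k : ℕ) : Finite {w : List Step // WrdP j k w} := by
  haveI hfin : Finite (List.Vector Step (j + k)) := inferInstance
  exact @Finite.of_injective _ (List.Vector Step (j + k)) hfin
    (fun w => ⟨w.1, w.2.2.1⟩)
    (fun a b hab => Subtype.ext (congrArg (fun v : List.Vector Step (j + k) => v.1) hab))

lemma card_part1 (j k : ℕ) :
    Nat.card {w : List Step // BrgP j k w} = Nat.card {w : List Step // WrdP j k w} := by
  refine (Nat.card_eq_of_bijective
    (fun w => (⟨w.1 ++ List.replicate k Step.D, wrdP_forward w.2⟩ :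
      {w : List Step // BrgP j k w})) ⟨?_, ?_⟩).symm
  · rintro ⟨a, ha⟩ ⟨b, hb⟩ hab
    have h := congrArg Subtype.val hab
    exact Subtype.ext (List.append_inj_left' h (by simp))
  · rintro ⟨v, hv⟩
    obtain ⟨w, hw, rfl⟩ := brgP_backward hv
    exact ⟨⟨w, hw⟩, rfl⟩


lemma wrd_card_k0 (j : ℕ) : Nat.card {w : List Step // WrdP j 0 w} = 0 := by
  have : IsEmpty {w : List Step // WrdP j 0 w} :=
    ⟨fun w => by have := wrdP_k_pos w.2; omega⟩
  exact Nat.card_of_isEmpty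

lemma wrd_card_j0 (k : ℕ) : Nat.card {w : List Step // WrdP 0 k w} = 0 := by
  have : IsEmpty {w : List Step // WrdP 0 k w} := by
    refine ⟨fun w => ?_⟩
    have hmem : Step.H ∈ w.1 := List.mem_of_getLast? w.2.2.2.2.1
    have := List.count_pos_iff.2 hmem
    have := w.2.2.2.1
    omega
  exact Nat.card_of_isEmpty

lemma card_plift (P : Prop) [Decidable P] :
    Nat.card (PLift P) = if P then 1 else 0 := by
  split_ifs with h
  · have : Unique (PLift P) := ⟨⟨⟨h⟩⟩, fun a => rfl⟩
    exact Nat.card_unique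
  · have : IsEmpty (PLift P) := ⟨fun a => h a.down⟩
    exact Nat.card_of_isEmpty

lemma wrdP_consU {j k : ℕ} {w : List Step} (h : WrdP j k w) :
    WrdP j (k + 1) (Step.U :: w) := by
  obtain ⟨h1, h2, h3, h4, h5, h6⟩ := h
  refine ⟨?_, ?_, ?_, ?_, ?_, rfl⟩
  · intro s hs
    rcases List.mem_cons.1 hs with rfl | hs
    · exact Or.inl rfl
    · exact h1 s hs
  · simp only [List.length_cons]
    omega
  · simp [List.count_cons, h3]
  · cases w with
    | nil => simp at h6
    | cons y r => rw [List.getLast?_cons_cons]; exact h4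
  · intro hi
    have hf := (hasF_iff _ _ _).2 hi
    cases w with
    | nil => simp at hf
    | cons y r =>
      rcases hf with ⟨h', -⟩ | hf
      · exact absurd h' (by decide)
      · exact h5 ((hasF_iff _ _ _).1 hf)

lemma wrdP_consUH {j k : ℕ} {w : List Step} (h : WrdP j k w) :
    WrdP (j + 1) (k + 1) (Step.U :: Step.H :: w) := by
  obtain ⟨h1, h2, h3, h4, h5, h6⟩ := h
  have hne : w ≠ [] := by intro e; rw [e] at h6; simp at h6
  refine ⟨?_, ?_, ?_, ?_, ?_, rfl⟩
  · intro s hs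
    rcases List.mem_cons.1 hs with rfl | hs
    · exact Or.inl rfl
    · rcases List.mem_cons.1 hs with rfl | hs
      · exact Or.inr rfl
      · exact h1 s hs
  · simp only [List.length_cons]
    omega
  · simp [List.count_cons, h3]
  · cases w with
    | nil => exact absurd rfl hne
    | cons y r => rw [List.getLast?_cons_cons, List.getLast?_cons_cons]; exact h4
  · intro hi
    have hf := (hasF_iff _ _ _).2 hi
    rcases hf with ⟨h', -⟩ | hf
    · exact absurd h' (by decide)
    · cases hw : w with
      | nil => exact absurd hw hne
      | cons y r =>
        subst hw
        have hy : y = Step.U := by simpa using h6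
        subst hy
        rcases hf with ⟨-, h'⟩ | hf
        · exact absurd h' (by decide)
        · exact h5 ((hasF_iff _ _ _).1 hf)

lemma wrdP_UH : WrdP 1 1 [Step.U, Step.H] := by
  refine ⟨?_, rfl, rfl, rfl, ?_, rfl⟩
  · intro s hs
    rcases List.mem_cons.1 hs with rfl | hs
    · exact Or.inl rfl
    · rcases List.mem_cons.1 hs with rfl | hs
      · exact Or.inr rfl
      · simp at hs
  · intro hi
    have hf := (hasF_iff _ _ _).2 hi
    rcases hf with ⟨h', -⟩ | hf
    · exact absurd h' (by decide)
    · simp at hf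

lemma wrd_card_rec (j k : ℕ) :
    Nat.card {w : List Step // WrdP (j + 1) (k + 1) w}
      = Nat.card {w : List Step // WrdP (j + 1) k w}
        + Nat.card {w : List Step // WrdP j k w}
        + (if j = 0 ∧ k = 0 then 1 else 0) := by
  haveI : Subsingleton (PLift (j = 0 ∧ k = 0)) :=
    ⟨fun a b => by cases a; cases b; rfl⟩
  haveI : Finite (PLift (j = 0 ∧ k = 0)) := Finite.of_subsingleton
  have key : Nat.card ({w : List Step // WrdP (j + 1) k w}
      ⊕ {w : List Step // WrdP j k w} ⊕ PLift (j = 0 ∧ k = 0))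
      = Nat.card {w : List Step // WrdP (j + 1) (k + 1) w} := by
    apply Nat.card_eq_of_bijective
      (fun x => match x with
        | Sum.inl w => ⟨Step.U :: w.1, wrdP_consU w.2⟩
        | Sum.inr (Sum.inl w) => ⟨Step.U :: Step.H :: w.1, wrdP_consUH w.2⟩
        | Sum.inr (Sum.inr p) => ⟨[Step.U, Step.H], by
            obtain ⟨rfl, rfl⟩ := p.down
            exact wrdP_UH⟩)
    constructor
    · rintro (⟨a, ha⟩ | ⟨a, ha⟩ | pa) (⟨b, hb⟩ | ⟨b, hb⟩ | pb) hab <;>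
        simp only [Sum.inl.injEq, Sum.inr.injEq, Subtype.mk.injEq, List.cons.injEq] at hab ⊢
      · exact hab.2
      · exfalso
        obtain ⟨-, rfl⟩ := hab
        simpa using ha.2.2.2.2.2
      · exfalso
        obtain ⟨-, rfl⟩ := hab
        simpa using ha.2.2.2.2.2
      · exfalso
        obtain ⟨-, h'⟩ := hab
        subst h'
        simpa using hb.2.2.2.2.2
      · exact hab.2.2
      · exfalso
        obtain ⟨-, -, h'⟩ := hab
        exact wrdP_ne_nil ha h'
      · exfalso
        obtain ⟨-, h'⟩ := hab
        subst h'
        simpa using hb.2.2.2.2.2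
      · exfalso
        obtain ⟨-, -, h'⟩ := hab
        subst h'
        exact wrdP_ne_nil hb rfl
      · exact Subsingleton.elim _ _
    · rintro ⟨v, hv⟩
      cases v with
      | nil => exact absurd rfl (wrdP_ne_nil hv)
      | cons x t =>
        have hx : x = Step.U := by simpa using hv.2.2.2.2.2
        subst hx
        cases t with
        | nil => exact absurd hv.2.2.2.1 (by decide)
        | cons y r =>
          rcases hv.1 y (List.mem_cons_of_mem _ (List.mem_cons_self)) with hy | hy
          · -- second letter U : strip one U
            subst hy
            refine ⟨Sum.inl ⟨Step.U :: r, ?_⟩, rfl⟩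
            obtain ⟨h1, h2, h3, h4, h5, h6⟩ := hv
            refine ⟨fun s hs => h1 s (List.mem_cons_of_mem _ hs), ?_, ?_, ?_, ?_, rfl⟩
            · simp only [List.length_cons] at h2 ⊢
              omega
            · simpa [List.count_cons] using h3
            · rw [List.getLast?_cons_cons] at h4
              exact h4
            · intro hi
              exact h5 (hi.trans (List.infix_cons (List.infix_refl _)))
          · subst hy
            cases r with
            | nil =>
              -- v = [U, H]
              have h3 := hv.2.2.1
              have h2 := hv.2.1
              simp [List.count_cons] at h3
              simp at h2
              have hj : j = 0 := by omega
              have hk : k = 0 := by omega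
              exact ⟨Sum.inr (Sum.inr ⟨⟨hj, hk⟩⟩), rfl⟩
            | cons z r' =>
              have hz : z = Step.U := by
                rcases hv.1 z (by simp) with hz | hz
                · exact hz
                · exfalso
                  subst hz
                  exact hv.2.2.2.2.1 ((hasF_iff _ _ _).1
                    (Or.inr (Or.inl ⟨rfl, rfl⟩)))
              subst hz
              refine ⟨Sum.inr (Sum.inl ⟨Step.U :: r', ?_⟩), rfl⟩
              obtain ⟨h1, h2, h3, h4, h5, h6⟩ := hv
              refine ⟨fun s hs => h1 s (by
                rcases List.mem_cons.1 hs with rfl | hs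
                · simp
                · simp [hs]), ?_, ?_, ?_, ?_, rfl⟩
              · simp only [List.length_cons] at h2 ⊢
                omega
              · simp only [List.count_cons] at h3 ⊢
                simp at h3 ⊢
                omega
              · rw [List.getLast?_cons_cons, List.getLast?_cons_cons] at h4
                exact h4
              · intro hi
                exact h5 ((hi.trans (List.infix_cons (List.infix_refl _))).trans
                  (List.infix_cons (List.infix_refl _)))
  rw [← key, Nat.card_sum, Nat.card_sum, card_plift]
  ring

lemma final_arith (j k : ℕ) :
    ((Nat.card {w : List Step // WrdP j k w} : ℚ))
      - (if 1 ≤ k then (1 : ℚ) * (Nat.card {w : List Step // WrdP j (k-1) w} : ℚ) else 0)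
      - (if 1 ≤ j ∧ 1 ≤ k then
          (1 : ℚ) * (Nat.card {w : List Step // WrdP (j-1) (k-1) w} : ℚ) else 0)
      = if j = 1 ∧ k = 1 then 1 else 0 := by
  match j, k with
  | j, 0 =>
    rw [if_neg (by omega), if_neg (by omega), if_neg (by omega), wrd_card_k0]
    norm_num
  | 0, k+1 =>
    rw [if_pos (by omega), if_neg (by omega), if_neg (by omega),
      wrd_card_j0, wrd_card_j0]
    norm_num
  | j+1, k+1 =>
    have h := wrd_card_rec j k
    simp only [Nat.add_sub_cancel]
    rw [if_pos (by omega), if_pos ⟨by omega, by omega⟩, h]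
    by_cases hd : j = 0 ∧ k = 0
    · rw [if_pos (by omega), if_pos (by omega)]
      push_cast
      ring
    · rw [if_neg (by omega), if_neg (by omega)]
      push_cast
      ring

end Aux
/-- bargraphs avoiding `DH` and `HH` with `j` `H`s and `k` `U`s are
equinumerous with words over `{U,H}` of length `j + k` with `j` letters `H`, ending
in `H`, with no `HH`, starting with `U`; equivalently, their generating function is
`xy/(1 − y − xy)`. -/
theorem increasing_bargraphs :
    (∀ j k : ℕ,
      Nat.card {w : List Step // IsBargraph w ∧ ¬ [Step.D, Step.H] <:+: w ∧
          ¬ [Step.H, Step.H] <:+: w ∧ w.count Step.H = j ∧ w.count Step.U = k}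
        = Nat.card {w : List Step // (∀ s ∈ w, s = Step.U ∨ s = Step.H) ∧
            w.length = j + k ∧ w.count Step.H = j ∧
            w.getLast? = some Step.H ∧ ¬ [Step.H, Step.H] <:+: w ∧
            w.head? = some Step.U}) ∧
    (1 - MvPowerSeries.X (1 : Fin 2)
        - MvPowerSeries.X (0 : Fin 2) * MvPowerSeries.X (1 : Fin 2)) * BDHHH
      = MvPowerSeries.X (0 : Fin 2) * MvPowerSeries.X (1 : Fin 2) := by
  constructor
  · exact fun j k => card_part1 j k
  · apply MvPowerSeries.ext
    intro d
    have hBD : ∀ e : Fin 2 →₀ ℕ, (MvPowerSeries.coeff e) BDHHH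
        = (Nat.card {w : List Step // WrdP (e 0) (e 1) w} : ℚ) := by
      intro e
      rw [MvPowerSeries.coeff_apply]
      show ((Nat.card {w : List Step // BrgP (e 0) (e 1) w} : ℕ) : ℚ) = _
      exact congrArg (Nat.cast : ℕ → ℚ) (card_part1 (e 0) (e 1))
    have hXY : (MvPowerSeries.X (0 : Fin 2) * MvPowerSeries.X (1 : Fin 2)
        : MvPowerSeries (Fin 2) ℚ)
        = MvPowerSeries.monomial (Finsupp.single 0 1 + Finsupp.single 1 1) 1 := by
      rw [MvPowerSeries.X_def, MvPowerSeries.X_def,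
        MvPowerSeries.monomial_mul_monomial, one_mul]
    rw [sub_mul, sub_mul, one_mul, map_sub, map_sub, hXY,
      MvPowerSeries.X_def, MvPowerSeries.coeff_monomial_mul,
      MvPowerSeries.coeff_monomial_mul, MvPowerSeries.coeff_monomial]
    have e1 : (d - Finsupp.single 1 1 : Fin 2 →₀ ℕ) 0 = d 0 := by
      rw [Finsupp.tsub_apply, Finsupp.single_apply]
      simp
    have e2 : (d - Finsupp.single 1 1 : Fin 2 →₀ ℕ) 1 = d 1 - 1 := by
      rw [Finsupp.tsub_apply, Finsupp.single_apply]
      simp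
    have e3 : (d - (Finsupp.single 0 1 + Finsupp.single 1 1) : Fin 2 →₀ ℕ) 0 = d 0 - 1 := by
      rw [Finsupp.tsub_apply, Finsupp.add_apply, Finsupp.single_apply, Finsupp.single_apply]
      simp
    have e4 : (d - (Finsupp.single 0 1 + Finsupp.single 1 1) : Fin 2 →₀ ℕ) 1 = d 1 - 1 := by
      rw [Finsupp.tsub_apply, Finsupp.add_apply, Finsupp.single_apply, Finsupp.single_apply]
      simp
    have c1 : Finsupp.single 1 1 ≤ d ↔ 1 ≤ d 1 := Finsupp.single_le_iff
    have c2 : Finsupp.single 0 1 + Finsupp.single 1 1 ≤ d ↔ 1 ≤ d 0 ∧ 1 ≤ d 1 := by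
      rw [Finsupp.le_def]
      constructor
      · intro h
        refine ⟨?_, ?_⟩
        · have := h 0
          simpa [Finsupp.add_apply, Finsupp.single_apply] using this
        · have := h 1
          simpa [Finsupp.add_apply, Finsupp.single_apply] using this
      · rintro ⟨h0, h1⟩ i
        fin_cases i <;>
          simpa [Finsupp.add_apply, Finsupp.single_apply] using (by assumption : _)
    have c3 : d = Finsupp.single 0 1 + Finsupp.single 1 1 ↔ d 0 = 1 ∧ d 1 = 1 := by
      constructor
      · intro h
        rw [h]
        constructor <;> simp [Finsupp.add_apply, Finsupp.single_apply]
      · rintro ⟨h0, h1⟩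
        ext i
        fin_cases i <;> simp [Finsupp.add_apply, Finsupp.single_apply, h0, h1]
    simp only [hBD, e1, e2, e3, e4]
    rw [if_congr c1 rfl rfl, if_congr c2 rfl rfl, if_congr c3 rfl rfl]
    exact final_arith (d 0) (d 1)
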